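/- For all integers n ≥ 0 and k ≥ 1, the determinant of the n×n matrix over ℚ(q) with entries q^{(i-j)(i-j-1)/2} · [i+j+k choose i-j+1] for 0 ≤ j ≤ i+1 and 0 for j > i+1, 0 ≤ i, j ≤ n-1, equals C_n^{(k)}(q) = ([k]/[2n+k])·[2n+k choose n]. -/

import Mathlib

noncomputable def qq : RatFunc ℚ := RatFunc.X
noncomputable def qInt (n : ℕ) : RatFunc ℚ := ∑ i ∈ Finset.range n, qq ^ i
noncomputable def qFact (n : ℕ) : RatFunc ℚ := ∏ i ∈ Finset.range n, qInt (i + 1)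
noncomputable def qChoose (a b : ℕ) : RatFunc ℚ :=
  if b ≤ a then qFact a / (qFact b * qFact (a - b)) else 0

open Finset

lemma qq_pow_ne_one {n : ℕ} (hn : 1 ≤ n) : qq ^ n ≠ 1 := by
  intro h
  have : (Polynomial.X : Polynomial ℚ) ^ n = 1 := by
    apply RatFunc.algebraMap_injective ℚ
    simpa [qq, RatFunc.algebraMap_X, map_pow] using h
  have := congrArg Polynomial.natDegree this
  simp [Polynomial.natDegree_X_pow] at this
  omega

lemma qInt_ne_zero {n : ℕ} (hn : 1 ≤ n) : qInt n ≠ 0 := by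
  intro h
  have hg : (∑ i ∈ range n, qq ^ i) * (qq - 1) = qq ^ n - 1 := geom_sum_mul qq n
  rw [show (∑ i ∈ range n, qq ^ i) = qInt n from rfl, h, zero_mul] at hg
  have : qq ^ n = 1 := by linear_combination -hg
  exact qq_pow_ne_one hn this

lemma qFact_ne_zero (n : ℕ) : qFact n ≠ 0 := by
  unfold qFact
  exact Finset.prod_ne_zero_iff.2 fun i _ => qInt_ne_zero (Nat.le_add_left 1 i)

lemma qFact_succ (n : ℕ) : qFact (n + 1) = qFact n * qInt (n + 1) :=
  Finset.prod_range_succ _ n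

lemma qInt_add (a b : ℕ) : qInt (a + b) = qInt a + qq ^ a * qInt b := by
  unfold qInt
  rw [Finset.sum_range_add, Finset.mul_sum]
  congr 1
  exact Finset.sum_congr rfl fun i _ => (pow_add qq a i)

lemma qChoose_of_le {a b : ℕ} (h : b ≤ a) :
    qChoose a b = qFact a / (qFact b * qFact (a - b)) := if_pos h

lemma qChoose_zero (a : ℕ) : qChoose a 0 = 1 := by
  rw [qChoose_of_le (Nat.zero_le a)]
  simp [qFact, div_self (qFact_ne_zero a)]
  exact qFact_ne_zero a

lemma qChoose_ne_zero {a b : ℕ} (h : b ≤ a) : qChoose a b ≠ 0 := by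
  rw [qChoose_of_le h]
  exact div_ne_zero (qFact_ne_zero a) (mul_ne_zero (qFact_ne_zero b) (qFact_ne_zero _))

lemma qChoose_of_gt {a b : ℕ} (h : a < b) : qChoose a b = 0 := if_neg (by omega)

lemma qFact_zero : qFact 0 = 1 := by simp [qFact]

lemma qChoose_self (a : ℕ) : qChoose a a = 1 := by
  rw [qChoose_of_le le_rfl, Nat.sub_self, qFact_zero, mul_one, div_self (qFact_ne_zero a)]

lemma pascal₁ {n j : ℕ} (h : j ≤ n) :
    qChoose (n+1) (j+1) = qChoose n (j+1) + qq ^ (n - j) * qChoose n j := by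
  by_cases hlt : j + 1 ≤ n
  case neg =>
    have hj : j = n := by omega
    subst hj
    rw [show qChoose j (j+1) = 0 from qChoose_of_gt (by omega),
      qChoose_self (j+1), qChoose_self j]
    simp
  case pos =>
    have h1 : j + 1 ≤ n := hlt
    rw [qChoose_of_le (show j + 1 ≤ n + 1 by omega), qChoose_of_le h1, qChoose_of_le h]
    have e1 : n + 1 - (j + 1) = n - j := by omega
    have e2 : qFact (n - j) = qFact (n - j - 1) * qInt (n - j) := by
      have : n - j = (n - j - 1) + 1 := by omega
      rw [this]; exact qFact_succ _
    have e3 : n - (j+1) = n - j - 1 := by omega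
    have e4 : qFact (n+1) = qFact n * qInt (n+1) := qFact_succ n
    have e5 : qFact (j+1) = qFact j * qInt (j+1) := qFact_succ j
    have key : qInt (n+1) = qInt (n - j) + qq ^ (n - j) * qInt (j+1) := by
      have := qInt_add (n - j) (j + 1)
      rwa [show n - j + (j+1) = n + 1 by omega] at this
    rw [e1, e3, e4, e5, key, e2]
    have hfn := qFact_ne_zero n
    have hfj := qFact_ne_zero j
    have hfj1 := qInt_ne_zero (show 1 ≤ j + 1 by omega)
    have hfnj := qFact_ne_zero (n - j - 1)
    have hinj := qInt_ne_zero (show 1 ≤ n - j by omega)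
    field_simp

lemma pascal₂ {n j : ℕ} (h : j ≤ n) :
    qChoose (n+1) (j+1) = qq ^ (j+1) * qChoose n (j+1) + qChoose n j := by
  by_cases hlt : j + 1 ≤ n
  case neg =>
    have hj : j = n := by omega
    subst hj
    rw [show qChoose j (j+1) = 0 from qChoose_of_gt (by omega),
      qChoose_self (j+1), qChoose_self j]
    simp
  case pos =>
    have h1 : j + 1 ≤ n := hlt
    rw [qChoose_of_le (show j + 1 ≤ n + 1 by omega), qChoose_of_le h1, qChoose_of_le h]
    have e2 : qFact (n - j) = qFact (n - j - 1) * qInt (n - j) := by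
      have : n - j = (n - j - 1) + 1 := by omega
      rw [this]; exact qFact_succ _
    have key : qInt (n+1) = qInt (j+1) + qq ^ (j+1) * qInt (n - j) := by
      have := qInt_add (j+1) (n - j)
      rwa [show j + 1 + (n - j) = n + 1 by omega] at this
    rw [show n + 1 - (j + 1) = n - j by omega, show n - (j+1) = n - j - 1 by omega,
      qFact_succ n, qFact_succ j, key, e2]
    have hfn := qFact_ne_zero n
    have hfj := qFact_ne_zero j
    have hfj1 := qInt_ne_zero (show 1 ≤ j + 1 by omega)
    have hfnj := qFact_ne_zero (n - j - 1)
    have hinj := qInt_ne_zero (show 1 ≤ n - j by omega)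
    field_simp
    ring

def tri (t : ℕ) : ℕ := t * (t - 1) / 2

lemma tri_succ (t : ℕ) : tri (t + 1) = tri t + t := by
  have h : (t+1) * (t+1-1) = t*(t-1) + 2*t := by
    cases t with
    | zero => rfl
    | succ s => simp [Nat.succ_sub_one]; ring
  unfold tri
  rw [h]
  omega

noncomputable def G0 (c m : ℕ) : RatFunc ℚ :=
  ∑ l ∈ range (m+1),
    (-1 : RatFunc ℚ)^(m-l) * qq^(tri (m-l)) * qChoose (2*l+c) l * qChoose (m+l+c) (m-l)

noncomputable def G1 (c m : ℕ) : RatFunc ℚ :=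
  ∑ l ∈ range (m+1),
    (-1 : RatFunc ℚ)^(m-l) * qq^(tri (m-l) + (m-l)) * qChoose (2*l+c) l * qChoose (m+l+c) (m-l)

noncomputable def GY (c m : ℕ) : RatFunc ℚ :=
  ∑ l ∈ range (m+2),
    (-1 : RatFunc ℚ)^(m+1-l) * qq^(tri (m+1-l) + (m+1-l)) * qChoose (2*l+c+1) l *
      qChoose (m+1+l+c) (m+1-l)

noncomputable def GZ (c m : ℕ) : RatFunc ℚ :=
  ∑ l ∈ range (m+2),
    (-1 : RatFunc ℚ)^(m+1-l) * qq^(tri (m+1-l) + (m+1-l)) * qChoose (2*l+c) l *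
      qChoose (m+l+c) (m+1-l)

lemma V1 (c m : ℕ) : GY c m = G1 c (m+1) + qq^(m+c+2) * G0 (c+2) m := by
  unfold GY G1 G0
  rw [Finset.sum_range_succ' _ (m+1), Finset.sum_range_succ' _ (m+1), Finset.mul_sum]
  have hterm : ∀ l ∈ range (m+1),
      (-1 : RatFunc ℚ)^(m+1-(l+1)) * qq^(tri (m+1-(l+1)) + (m+1-(l+1))) *
        qChoose (2*(l+1)+c+1) (l+1) * qChoose (m+1+(l+1)+c) (m+1-(l+1))
      = (-1 : RatFunc ℚ)^(m+1-(l+1)) * qq^(tri (m+1-(l+1)) + (m+1-(l+1))) *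
          qChoose (2*(l+1)+c) (l+1) * qChoose (m+1+(l+1)+c) (m+1-(l+1))
        + qq^(m+c+2) * ((-1 : RatFunc ℚ)^(m-l) * qq^(tri (m-l)) * qChoose (2*l+(c+2)) l *
            qChoose (m+l+(c+2)) (m-l)) := by
    intro l hl
    have hlm : l ≤ m := by simpa [Nat.lt_succ_iff] using hl
    have e1 : m + 1 - (l + 1) = m - l := by omega
    have e2 : 2*(l+1)+c+1 = (2*l+c+2)+1 := by ring
    have e3 : 2*(l+1)+c = 2*l+c+2 := by ring
    have e4 : m+1+(l+1)+c = m+l+(c+2) := by ring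
    have e5 : 2*l+(c+2) = 2*l+c+2 := by ring
    rw [e1, e2, e3, e4, e5, pascal₁ (show l ≤ 2*l+c+2 by omega),
      show 2*l+c+2-l = l+c+2 by omega]
    set t := tri (m - l) with ht
    rw [mul_add]
    have hq : qq^(t+(m-l)) * qq^(l+c+2) = qq^(m+c+2) * qq^t := by
      rw [← pow_add, ← pow_add]
      congr 1
      omega
    linear_combination ((-1 : RatFunc ℚ)^(m-l) * qChoose (2*l+c+2) l *
      qChoose (m+l+(c+2)) (m-l)) * hq
  rw [Finset.sum_congr rfl hterm, Finset.sum_add_distrib]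
  have h0 : (-1 : RatFunc ℚ)^(m+1-0) * qq^(tri (m+1-0) + (m+1-0)) * qChoose (2*0+c+1) 0 *
      qChoose (m+1+0+c) (m+1-0)
      = (-1 : RatFunc ℚ)^(m+1-0) * qq^(tri (m+1-0) + (m+1-0)) * qChoose (2*0+c) 0 *
      qChoose (m+1+0+c) (m+1-0) := by
    rw [qChoose_zero, qChoose_zero]
  rw [h0]
  ring

lemma V2 (c m : ℕ) : GY c m = qq^(m+1) * G0 c (m+1) + G1 (c+2) m := by
  unfold GY G1 G0
  rw [Finset.sum_range_succ' _ (m+1), Finset.sum_range_succ' _ (m+1)]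
  simp only [Nat.sub_zero]
  have hterm : ∀ l ∈ range (m+1),
      (-1 : RatFunc ℚ)^(m+1-(l+1)) * qq^(tri (m+1-(l+1)) + (m+1-(l+1))) *
        qChoose (2*(l+1)+c+1) (l+1) * qChoose (m+1+(l+1)+c) (m+1-(l+1))
      = qq^(m+1) * ((-1 : RatFunc ℚ)^(m+1-(l+1)) * qq^(tri (m+1-(l+1))) *
          qChoose (2*(l+1)+c) (l+1) * qChoose (m+1+(l+1)+c) (m+1-(l+1)))
        + (-1 : RatFunc ℚ)^(m-l) * qq^(tri (m-l) + (m-l)) * qChoose (2*l+(c+2)) l *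
            qChoose (m+l+(c+2)) (m-l) := by
    intro l hl
    have hlm : l ≤ m := by simpa [Nat.lt_succ_iff] using hl
    have e1 : m + 1 - (l + 1) = m - l := by omega
    have e2 : 2*(l+1)+c+1 = (2*l+c+2)+1 := by ring
    have e3 : 2*(l+1)+c = 2*l+c+2 := by ring
    have e4 : m+1+(l+1)+c = m+l+(c+2) := by ring
    have e5 : 2*l+(c+2) = 2*l+c+2 := by ring
    rw [e1, e2, e3, e4, e5, pascal₂ (show l ≤ 2*l+c+2 by omega)]
    set t := tri (m - l) with ht
    have hq : qq^(t+(m-l)) * qq^(l+1) = qq^(m+1) * qq^t := by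
      rw [← pow_add, ← pow_add]
      congr 1
      omega
    linear_combination ((-1 : RatFunc ℚ)^(m-l) * qChoose (2*l+c+2) (l+1) *
      qChoose (m+l+(c+2)) (m-l)) * hq
  have h0 : (-1 : RatFunc ℚ)^(m+1) * qq^(tri (m+1) + (m+1)) * qChoose (2*0+c+1) 0 *
      qChoose (m+1+0+c) (m+1)
      = qq^(m+1) * ((-1 : RatFunc ℚ)^(m+1) * qq^(tri (m+1)) * qChoose (2*0+c) 0 *
      qChoose (m+1+0+c) (m+1)) := by
    rw [qChoose_zero, qChoose_zero, pow_add]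
    ring
  rw [Finset.sum_congr rfl hterm, Finset.sum_add_distrib, h0, mul_add, Finset.mul_sum]
  ring

lemma W1 (c m : ℕ) : GZ c m = G1 c (m+1) + qq^(2*m+c+1) * G0 c m := by
  unfold GZ G1 G0
  rw [Finset.sum_range_succ _ (m+1), Finset.sum_range_succ _ (m+1)]
  have hterm : ∀ l ∈ range (m+1),
      (-1 : RatFunc ℚ)^(m+1-l) * qq^(tri (m+1-l) + (m+1-l)) * qChoose (2*l+c) l *
          qChoose (m+l+c) (m+1-l)
      = (-1 : RatFunc ℚ)^(m+1-l) * qq^(tri (m+1-l) + (m+1-l)) * qChoose (2*l+c) l *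
          qChoose (m+1+l+c) (m+1-l)
        + qq^(2*m+c+1) * ((-1 : RatFunc ℚ)^(m-l) * qq^(tri (m-l)) * qChoose (2*l+c) l *
            qChoose (m+l+c) (m-l)) := by
    intro l hl
    have hlm : l ≤ m := by simpa [Nat.lt_succ_iff] using hl
    have e1 : m + 1 - l = (m - l) + 1 := by omega
    have e2 : m+1+l+c = (m+l+c)+1 := by ring
    rw [e1, e2, pascal₁ (show m - l ≤ m+l+c by omega),
      show m+l+c-(m-l) = 2*l+c by omega, tri_succ]
    set t := tri (m - l) with ht
    have hcert : (-1 : RatFunc ℚ)^((m-l)+1) * (qq^(t+(m-l)+((m-l)+1)) * qq^(2*l+c))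
        = -(qq^(2*m+c+1) * ((-1 : RatFunc ℚ)^(m-l) * qq^t)) := by
      have hp : qq^(t+(m-l)+((m-l)+1)) * qq^(2*l+c) = qq^(2*m+c+1) * qq^t := by
        rw [← pow_add, ← pow_add]
        congr 1
        omega
      rw [hp, pow_succ]
      ring
    linear_combination (-1 : RatFunc ℚ) * (qChoose (2*l+c) l * qChoose (m+l+c) (m-l)) * hcert
  have h0 : (-1 : RatFunc ℚ)^(m+1-(m+1)) * qq^(tri (m+1-(m+1)) + (m+1-(m+1))) *
      qChoose (2*(m+1)+c) (m+1) * qChoose (m+(m+1)+c) (m+1-(m+1))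
      = (-1 : RatFunc ℚ)^(m+1-(m+1)) * qq^(tri (m+1-(m+1)) + (m+1-(m+1))) *
      qChoose (2*(m+1)+c) (m+1) * qChoose (m+1+(m+1)+c) (m+1-(m+1)) := by
    rw [Nat.sub_self, qChoose_zero, qChoose_zero]
  rw [Finset.sum_congr rfl hterm, Finset.sum_add_distrib, h0, Finset.mul_sum]
  ring

lemma W2 (c m : ℕ) : GZ c m = G0 c (m+1) + G1 c m := by
  unfold GZ G1 G0
  rw [Finset.sum_range_succ _ (m+1), Finset.sum_range_succ _ (m+1)]
  have hterm : ∀ l ∈ range (m+1),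
      (-1 : RatFunc ℚ)^(m+1-l) * qq^(tri (m+1-l) + (m+1-l)) * qChoose (2*l+c) l *
          qChoose (m+l+c) (m+1-l)
      = (-1 : RatFunc ℚ)^(m+1-l) * qq^(tri (m+1-l)) * qChoose (2*l+c) l *
          qChoose (m+1+l+c) (m+1-l)
        + (-1 : RatFunc ℚ)^(m-l) * qq^(tri (m-l) + (m-l)) * qChoose (2*l+c) l *
            qChoose (m+l+c) (m-l) := by
    intro l hl
    have hlm : l ≤ m := by simpa [Nat.lt_succ_iff] using hl
    have e1 : m + 1 - l = (m - l) + 1 := by omega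
    have e2 : m+1+l+c = (m+l+c)+1 := by ring
    rw [e1, e2, pascal₂ (show m - l ≤ m+l+c by omega), tri_succ]
    ring
  have h0 : (-1 : RatFunc ℚ)^(m+1-(m+1)) * qq^(tri (m+1-(m+1)) + (m+1-(m+1))) *
      qChoose (2*(m+1)+c) (m+1) * qChoose (m+(m+1)+c) (m+1-(m+1))
      = (-1 : RatFunc ℚ)^(m+1-(m+1)) * qq^(tri (m+1-(m+1))) *
      qChoose (2*(m+1)+c) (m+1) * qChoose (m+1+(m+1)+c) (m+1-(m+1)) := by
    rw [Nat.sub_self, qChoose_zero, qChoose_zero, Nat.add_zero]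
  rw [Finset.sum_congr rfl hterm, Finset.sum_add_distrib, h0]
  ring

lemma Gdiag : ∀ m c, G0 c m = qq^(m*(m+c)) ∧ G1 c m = 1 := by
  intro m
  induction m with
  | zero =>
    intro c
    constructor
    · show G0 c 0 = qq ^ (0*(0+c))
      unfold G0
      rw [Finset.sum_range_one]
      simp [tri, qChoose_zero]
    · show G1 c 0 = 1
      unfold G1
      rw [Finset.sum_range_one]
      simp [tri, qChoose_zero]
  | succ m ih =>
    intro c
    have h1 := V1 c m
    have h2 := V2 c m
    have h3 := W1 c m
    have h4 := W2 c m
    have e1 : G0 (c+2) m = qq^(m*(m+(c+2))) := (ih (c+2)).1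
    have e2 : G1 (c+2) m = 1 := (ih (c+2)).2
    have e3 : G0 c m = qq^(m*(m+c)) := (ih c).1
    have e4 : G1 c m = 1 := (ih c).2
    set X := G0 c (m+1) with hX
    set Y := G1 c (m+1) with hY
    have hA : Y + qq^((m+1)*(m+c+2)) = qq^(m+1) * X + 1 := by
      have h12 := h1.symm.trans h2
      rw [e1, e2] at h12
      have hp : qq^(m+c+2) * qq^(m*(m+(c+2))) = qq^((m+1)*(m+c+2)) := by
        rw [← pow_add]
        congr 1
        ring
      linear_combination h12 + hp
    have hB : Y + qq^((m+1)*(m+c+1)) = X + 1 := by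
      have h34 := h3.symm.trans h4
      rw [e3, e4] at h34
      have hp : qq^(2*m+c+1) * qq^(m*(m+c)) = qq^((m+1)*(m+c+1)) := by
        rw [← pow_add]
        congr 1
        ring
      linear_combination h34 + hp
    have hne : qq^(m+1) - 1 ≠ 0 :=
      sub_ne_zero.mpr (qq_pow_ne_one (by omega))
    have hX1 : X = qq^((m+1)*(m+c+1)) := by
      have hpow : qq^((m+1)*(m+c+2)) = qq^((m+1)*(m+c+1)) * qq^(m+1) := by
        rw [← pow_add, show (m+1)*(m+c+1)+(m+1) = (m+1)*(m+c+2) by ring]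
      have hkey : X * (qq^(m+1) - 1) = qq^((m+1)*(m+c+1)) * (qq^(m+1) - 1) := by
        linear_combination hB - hA + hpow
      exact mul_right_cancel₀ hne hkey
    refine ⟨?_, by linear_combination hB + hX1⟩
    rw [show (m+1)*((m+1)+c) = (m+1)*(m+c+1) by ring]
    exact hX1

noncomputable def Dq (k l : ℕ) : RatFunc ℚ := qInt k / qInt (2*l+k) * qChoose (2*l+k) l

noncomputable def ment (k i j : ℕ) : RatFunc ℚ :=
  if j ≤ i + 1 then
    qq ^ (((i : ℤ) - (j : ℤ)) * ((i : ℤ) - (j : ℤ) - 1) / 2).toNat *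
      qChoose (i + j + k) (i + 1 - j)
  else 0

lemma Dq_zero {k : ℕ} (hk : 1 ≤ k) : Dq k 0 = 1 := by
  unfold Dq
  rw [show 2*0+k = k by ring, div_self (qInt_ne_zero hk), qChoose_zero, one_mul]

lemma Dq_ne_zero {k : ℕ} (hk : 1 ≤ k) (l : ℕ) : Dq k l ≠ 0 := by
  unfold Dq
  exact mul_ne_zero (div_ne_zero (qInt_ne_zero hk) (qInt_ne_zero (by omega)))
    (qChoose_ne_zero (by omega))

lemma Dq_split (c l : ℕ) :
    Dq (c+1) (l+1) = qChoose (2*(l+1)+c) (l+1) - qq^(c+1) * qChoose (2*l+(c+2)) l := by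
  unfold Dq
  rw [show 2*(l+1)+(c+1) = (2*l+c+2)+1 by ring, show 2*(l+1)+c = 2*l+c+2 by ring,
    show 2*l+(c+2) = 2*l+c+2 by ring]
  rw [qChoose_of_le (show l+1 ≤ (2*l+c+2)+1 by omega),
    qChoose_of_le (show l+1 ≤ 2*l+c+2 by omega),
    qChoose_of_le (show l ≤ 2*l+c+2 by omega)]
  rw [show (2*l+c+2)+1-(l+1) = l+c+2 by omega, show 2*l+c+2-(l+1) = l+c+1 by omega,
    show 2*l+c+2-l = l+c+2 by omega]
  rw [qFact_succ (2*l+c+2), show l+c+2 = (l+c+1)+1 by omega, qFact_succ (l+c+1),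
    qFact_succ l]
  have key : qInt ((l+c+1)+1) = qInt (c+1) + qq^(c+1) * qInt (l+1) := by
    have := qInt_add (c+1) (l+1)
    rwa [show (c+1)+(l+1) = (l+c+1)+1 by omega] at this
  rw [key]
  have h1 := qFact_ne_zero (2*l+c+2)
  have h2 := qFact_ne_zero l
  have h3 := qFact_ne_zero (l+c+1)
  have h4 := qInt_ne_zero (show 1 ≤ l+1 by omega)
  have h5 := qInt_ne_zero (show 1 ≤ c+1 by omega)
  have h6 : qInt (c+1) + qq^(c+1) * qInt (l+1) ≠ 0 := by
    rw [← key]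
    exact qInt_ne_zero (by omega)
  have h7 : qInt ((2*l+c+2)+1) ≠ 0 := qInt_ne_zero (by omega)
  field_simp
  rw [eq_sub_iff_add_eq, ← add_div]
  exact div_self (by convert h6 using 1; ring)

lemma toNat_tri (d : ℕ) : ((d : ℤ) * ((d : ℤ) - 1) / 2).toNat = tri d := by
  cases d with
  | zero => norm_num [tri]
  | succ e =>
    have h1 : ((e+1 : ℕ) : ℤ) * (((e+1 : ℕ) : ℤ) - 1) = (((e+1)*e : ℕ) : ℤ) := by
      push_cast
      ring
    rw [h1]
    unfold tri
    simp only [Nat.succ_sub_one]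
    omega

lemma ment_lo {k i j : ℕ} (h : j ≤ i) :
    ment k i j = qq^(tri (i-j)) * qChoose (i+j+k) (i+1-j) := by
  unfold ment
  rw [if_pos (by omega)]
  congr 1
  have hd : (i : ℤ) - (j : ℤ) = ((i - j : ℕ) : ℤ) := by omega
  rw [hd, toNat_tri]

lemma ment_hi (k i : ℕ) : ment k i (i+1) = qq := by
  unfold ment
  rw [if_pos (le_refl _)]
  have hd : (i : ℤ) - ((i+1 : ℕ) : ℤ) = -1 := by push_cast; ring
  rw [hd, show ((-1 : ℤ) * (-1 - 1) / 2).toNat = 1 by decide, Nat.sub_self, qChoose_zero,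
    pow_one, mul_one]

lemma star (k m : ℕ) (hk : 1 ≤ k) :
    ∑ l ∈ range (m+2), (-1 : RatFunc ℚ)^(m+1-l) * qq^(m+1-l) * Dq k l * ment k m l = 0 := by
  obtain ⟨c, rfl⟩ : ∃ c, k = c + 1 := ⟨k - 1, by omega⟩
  have hterm : ∀ l ∈ range (m+2),
      (-1 : RatFunc ℚ)^(m+1-l) * qq^(m+1-l) * Dq (c+1) l * ment (c+1) m l
      = qq * ((-1 : RatFunc ℚ)^(m+1-l) * qq^(tri (m+1-l)) * Dq (c+1) l *
          qChoose (m+1+l+c) (m+1-l)) := by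
    intro l hl
    have hl2 : l ≤ m + 1 := by simpa [Nat.lt_succ_iff] using hl
    rcases Nat.lt_or_ge l (m+1) with hlo | hhi
    · have hlm : l ≤ m := by omega
      rw [ment_lo hlm, show m+l+(c+1) = m+1+l+c by ring]
      have hp : qq^(m+1-l) * qq^(tri (m-l)) = qq * qq^(tri (m+1-l)) := by
        rw [← pow_add, ← pow_succ']
        congr 1
        rw [show m+1-l = (m-l)+1 by omega, tri_succ]
        omega
      linear_combination ((-1 : RatFunc ℚ)^(m+1-l) * Dq (c+1) l *
        qChoose (m+1+l+c) (m+1-l)) * hp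
    · have hl1 : l = m + 1 := by omega
      subst hl1
      rw [ment_hi, Nat.sub_self, qChoose_zero, show tri 0 = 0 from rfl]
      ring
  rw [Finset.sum_congr rfl hterm, ← Finset.mul_sum]
  have hsplit : ∑ l ∈ range (m+2), (-1 : RatFunc ℚ)^(m+1-l) * qq^(tri (m+1-l)) *
      Dq (c+1) l * qChoose (m+1+l+c) (m+1-l)
      = G0 c (m+1) - qq^(c+1) * G0 (c+2) m := by
    unfold G0
    rw [Finset.sum_range_succ' _ (m+1), Finset.sum_range_succ' _ (m+1), Finset.mul_sum]
    have ht2 : ∀ l ∈ range (m+1),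
        (-1 : RatFunc ℚ)^(m+1-(l+1)) * qq^(tri (m+1-(l+1))) * Dq (c+1) (l+1) *
          qChoose (m+1+(l+1)+c) (m+1-(l+1))
        = (-1 : RatFunc ℚ)^(m+1-(l+1)) * qq^(tri (m+1-(l+1))) * qChoose (2*(l+1)+c) (l+1) *
            qChoose (m+1+(l+1)+c) (m+1-(l+1))
          - qq^(c+1) * ((-1 : RatFunc ℚ)^(m-l) * qq^(tri (m-l)) * qChoose (2*l+(c+2)) l *
              qChoose (m+l+(c+2)) (m-l)) := by
      intro l hl
      have e1 : m + 1 - (l + 1) = m - l := by omega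
      have e4 : m+1+(l+1)+c = m+l+(c+2) := by ring
      rw [e1, e4, Dq_split]
      ring
    have h00 : (-1 : RatFunc ℚ)^(m+1-0) * qq^(tri (m+1-0)) * Dq (c+1) 0 *
        qChoose (m+1+0+c) (m+1-0)
        = (-1 : RatFunc ℚ)^(m+1-0) * qq^(tri (m+1-0)) * qChoose (2*0+c) 0 *
        qChoose (m+1+0+c) (m+1-0) := by
      rw [Dq_zero (by omega), qChoose_zero]
    rw [Finset.sum_congr rfl ht2, Finset.sum_sub_distrib, h00]
    ring
  rw [hsplit, (Gdiag (m+1) c).1, (Gdiag m (c+2)).1, ← pow_add,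
    show (c+1)+(m*(m+(c+2))) = (m+1)*((m+1)+c) by ring, sub_self, mul_zero]

lemma qq_ne_zero : qq ≠ 0 := RatFunc.X_ne_zero

lemma div_chain {a b c : RatFunc ℚ} (hb : b ≠ 0) : a / b * (b / c) = a / c := by
  rw [div_mul_div_comm, mul_comm a b, mul_div_mul_left a c hb]

lemma ment_top {k i l : ℕ} (h : i + 2 ≤ l) : ment k i l = 0 := if_neg (by omega)

lemma Dq_teles (k : ℕ) (hk : 1 ≤ k) (N : ℕ) :
    ∏ i ∈ range N, (Dq k (i+1) / Dq k i) = Dq k N := by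
  induction N with
  | zero => simp [Dq_zero hk]
  | succ N ih =>
    rw [Finset.prod_range_succ, ih, mul_comm, div_mul_cancel₀ _ (Dq_ne_zero hk N)]

lemma starS (k i : ℕ) (hk : 1 ≤ k) :
    ∑ l ∈ range (i+1), (-1 : RatFunc ℚ)^(i-l) * qq^(i-l) * Dq k l * ment k i l
      = Dq k (i+1) := by
  have hstar := star k i hk
  rw [Finset.sum_range_succ] at hstar
  rw [Nat.sub_self, pow_zero, pow_zero, ment_hi, one_mul, one_mul] at hstar
  have hconv : ∀ l ∈ range (i+1),
      (-1 : RatFunc ℚ)^(i+1-l) * qq^(i+1-l) * Dq k l * ment k i l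
      = (-qq) * ((-1 : RatFunc ℚ)^(i-l) * qq^(i-l) * Dq k l * ment k i l) := by
    intro l hl
    have hli : l ≤ i := by simpa [Nat.lt_succ_iff] using hl
    rw [show i+1-l = (i-l)+1 by omega, pow_succ, pow_succ]
    ring
  rw [Finset.sum_congr rfl hconv, ← Finset.mul_sum] at hstar
  have hq := qq_ne_zero
  have : qq * (∑ l ∈ range (i+1),
      (-1 : RatFunc ℚ)^(i-l) * qq^(i-l) * Dq k l * ment k i l) = qq * Dq k (i+1) := by
    linear_combination -hstar
  exact mul_left_cancel₀ hq this

noncomputable def Umat (n k : ℕ) : Matrix (Fin n) (Fin n) (RatFunc ℚ) :=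
  Matrix.of fun i j =>
    if (i : ℕ) = (j : ℕ) then Dq k ((i : ℕ)+1) / Dq k (i : ℕ)
    else if (j : ℕ) = (i : ℕ) + 1 then qq else 0

noncomputable def Lmat (n k : ℕ) : Matrix (Fin n) (Fin n) (RatFunc ℚ) :=
  Matrix.of fun i j =>
    ∑ l ∈ range ((j : ℕ)+1),
      (-1 : RatFunc ℚ)^((j : ℕ)-l) * qq^((j : ℕ)-l) * (Dq k l / Dq k ((j : ℕ)+1)) *
        ment k (i : ℕ) l

lemma Umat_tri (n k : ℕ) : (Umat n k).BlockTriangular id := by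
  intro i j hij
  have h1 : (j : ℕ) < (i : ℕ) := hij
  show (if (i : ℕ) = (j : ℕ) then Dq k ((i : ℕ)+1) / Dq k (i : ℕ)
    else if (j : ℕ) = (i : ℕ) + 1 then qq else 0) = 0
  rw [if_neg (by omega), if_neg (by omega)]

lemma Lmat_tri {n k : ℕ} (hk : 1 ≤ k) : (Lmat n k).BlockTriangular OrderDual.toDual := by
  intro i j hij
  have h1 : (i : ℕ) < (j : ℕ) := hij
  show (∑ l ∈ range ((j : ℕ)+1),
      (-1 : RatFunc ℚ)^((j : ℕ)-l) * qq^((j : ℕ)-l) * (Dq k l / Dq k ((j : ℕ)+1)) *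
        ment k (i : ℕ) l) = 0
  have hsub : range ((i : ℕ)+2) ⊆ range ((j : ℕ)+1) := by
    intro x hx
    simp only [Finset.mem_range] at *
    omega
  have hzero : ∀ x ∈ range ((j : ℕ)+1), x ∉ range ((i : ℕ)+2) →
      (-1 : RatFunc ℚ)^((j : ℕ)-x) * qq^((j : ℕ)-x) * (Dq k x / Dq k ((j : ℕ)+1)) *
        ment k (i : ℕ) x = 0 := by
    intro x _ hx
    simp only [Finset.mem_range] at hx
    rw [ment_top (by omega), mul_zero]
  rw [← Finset.sum_subset hsub hzero]
  have hconv : ∀ l ∈ range ((i : ℕ)+2),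
      (-1 : RatFunc ℚ)^((j : ℕ)-l) * qq^((j : ℕ)-l) * (Dq k l / Dq k ((j : ℕ)+1)) *
        ment k (i : ℕ) l
      = ((-1 : RatFunc ℚ)^((j : ℕ)-((i : ℕ)+1)) * qq^((j : ℕ)-((i : ℕ)+1)) / Dq k ((j : ℕ)+1)) *
          ((-1 : RatFunc ℚ)^((i : ℕ)+1-l) * qq^((i : ℕ)+1-l) * Dq k l * ment k (i : ℕ) l) := by
    intro l hl
    have hli : l ≤ (i : ℕ) + 1 := by simpa [Nat.lt_succ_iff] using hl
    have hs : (-1 : RatFunc ℚ)^((j : ℕ)-((i : ℕ)+1)) * (-1 : RatFunc ℚ)^((i : ℕ)+1-l)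
        = (-1 : RatFunc ℚ)^((j : ℕ)-l) := by
      rw [← pow_add]
      congr 1
      omega
    have hp : qq^((j : ℕ)-((i : ℕ)+1)) * qq^((i : ℕ)+1-l) = qq^((j : ℕ)-l) := by
      rw [← pow_add]
      congr 1
      omega
    rw [← hs, ← hp]
    ring
  rw [Finset.sum_congr rfl hconv, ← Finset.mul_sum, star k (i : ℕ) hk, mul_zero]

lemma Lmat_diag {n k : ℕ} (hk : 1 ≤ k) (i : Fin n) : Lmat n k i i = 1 := by
  show (∑ l ∈ range ((i : ℕ)+1),
      (-1 : RatFunc ℚ)^((i : ℕ)-l) * qq^((i : ℕ)-l) * (Dq k l / Dq k ((i : ℕ)+1)) *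
        ment k (i : ℕ) l) = 1
  have hconv : ∀ l ∈ range ((i : ℕ)+1),
      (-1 : RatFunc ℚ)^((i : ℕ)-l) * qq^((i : ℕ)-l) * (Dq k l / Dq k ((i : ℕ)+1)) *
        ment k (i : ℕ) l
      = ((-1 : RatFunc ℚ)^((i : ℕ)-l) * qq^((i : ℕ)-l) * Dq k l * ment k (i : ℕ) l) /
          Dq k ((i : ℕ)+1) := by
    intro l _
    ring
  rw [Finset.sum_congr rfl hconv, ← Finset.sum_div, starS k (i : ℕ) hk,
    div_self (Dq_ne_zero hk _)]

lemma Lmat_mul_Umat {n k : ℕ} (hk : 1 ≤ k) :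
    Lmat n k * Umat n k = Matrix.of fun i j : Fin n => ment k (i : ℕ) (j : ℕ) := by
  ext i j
  rw [Matrix.mul_apply]
  have hsplit : ∀ t : Fin n,
      Lmat n k i t * Umat n k t j
      = (if t = j then Lmat n k i j * (Dq k ((j : ℕ)+1) / Dq k (j : ℕ)) else 0)
        + (if (t : ℕ)+1 = (j : ℕ) then Lmat n k i t * qq else 0) := by
    intro t
    by_cases h1 : (t : ℕ) = (j : ℕ)
    · have ht : t = j := Fin.ext h1
      subst ht
      rw [if_pos rfl, if_neg (by omega)]
      show Lmat n k i t * (if (t : ℕ) = (t : ℕ) then Dq k ((t : ℕ)+1) / Dq k (t : ℕ)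
        else if (t : ℕ) = (t : ℕ) + 1 then qq else 0) = _
      rw [if_pos rfl, add_zero]
    · rw [if_neg (fun hEq => h1 (congrArg Fin.val hEq))]
      show Lmat n k i t * (if (t : ℕ) = (j : ℕ) then Dq k ((t : ℕ)+1) / Dq k (t : ℕ)
        else if (j : ℕ) = (t : ℕ) + 1 then qq else 0) = _
      rw [if_neg h1]
      by_cases h2 : (t : ℕ)+1 = (j : ℕ)
      · rw [if_pos h2, if_pos h2.symm, zero_add]
      · rw [if_neg h2, if_neg (fun h => h2 h.symm), mul_zero, add_zero]
  rw [Finset.sum_congr rfl (fun t _ => hsplit t), Finset.sum_add_distrib,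
    Finset.sum_ite_eq' Finset.univ j _, if_pos (Finset.mem_univ j)]
  have hLj : Lmat n k i j * (Dq k ((j : ℕ)+1) / Dq k (j : ℕ))
      = ∑ l ∈ range ((j : ℕ)+1),
          (-1 : RatFunc ℚ)^((j : ℕ)-l) * qq^((j : ℕ)-l) * (Dq k l / Dq k (j : ℕ)) *
            ment k (i : ℕ) l := by
    show (∑ l ∈ range ((j : ℕ)+1),
        (-1 : RatFunc ℚ)^((j : ℕ)-l) * qq^((j : ℕ)-l) * (Dq k l / Dq k ((j : ℕ)+1)) *
          ment k (i : ℕ) l) * (Dq k ((j : ℕ)+1) / Dq k (j : ℕ)) = _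
    rw [Finset.sum_mul]
    refine Finset.sum_congr rfl fun l _ => ?_
    have hch : Dq k l / Dq k ((j : ℕ)+1) * (Dq k ((j : ℕ)+1) / Dq k (j : ℕ))
        = Dq k l / Dq k (j : ℕ) := div_chain (Dq_ne_zero hk _)
    linear_combination ((-1 : RatFunc ℚ)^((j : ℕ)-l) * qq^((j : ℕ)-l) *
      ment k (i : ℕ) l) * hch
  rcases Nat.eq_zero_or_pos (j : ℕ) with hj0 | hjpos
  · have hz : ∀ t : Fin n, (if (t : ℕ)+1 = (j : ℕ) then Lmat n k i t * qq else 0) = 0 :=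
      fun t => if_neg (by omega)
    rw [Finset.sum_congr rfl (fun t ht => hz t), Finset.sum_const_zero, add_zero, hLj, hj0]
    rw [Finset.sum_range_one, Nat.sub_self, pow_zero, pow_zero, Dq_zero hk]
    simp [hj0]
  · set p : Fin n := ⟨(j : ℕ)-1, by omega⟩ with hp
    have hpv : (p : ℕ) = (j : ℕ) - 1 := rfl
    have hconv : ∀ t : Fin n,
        (if (t : ℕ)+1 = (j : ℕ) then Lmat n k i t * qq else 0)
        = (if t = p then Lmat n k i t * qq else 0) := by
      intro t
      refine if_congr ?_ rfl rfl
      constructor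
      · intro h
        exact Fin.ext (by rw [hpv]; omega)
      · intro h
        rw [h, hpv]
        omega
    rw [Finset.sum_congr rfl (fun t _ => hconv t), Finset.sum_ite_eq' Finset.univ p _,
      if_pos (Finset.mem_univ p), hLj]
    have hLp : Lmat n k i p * qq
        = ∑ l ∈ range (j : ℕ), -((-1 : RatFunc ℚ)^((j : ℕ)-l) * qq^((j : ℕ)-l) *
            (Dq k l / Dq k (j : ℕ)) * ment k (i : ℕ) l) := by
      show (∑ l ∈ range ((p : ℕ)+1),
          (-1 : RatFunc ℚ)^((p : ℕ)-l) * qq^((p : ℕ)-l) * (Dq k l / Dq k ((p : ℕ)+1)) *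
            ment k (i : ℕ) l) * qq = _
      rw [hpv, show (j : ℕ) - 1 + 1 = (j : ℕ) by omega, Finset.sum_mul]
      refine Finset.sum_congr rfl fun l hl => ?_
      have hlj : l < (j : ℕ) := by simpa using hl
      have hs : (-1 : RatFunc ℚ)^((j : ℕ)-l) = -(-1 : RatFunc ℚ)^((j : ℕ)-1-l) := by
        rw [show (j : ℕ)-l = ((j : ℕ)-1-l)+1 by omega, pow_succ]
        ring
      have hq : qq^((j : ℕ)-l) = qq^((j : ℕ)-1-l) * qq := by
        rw [show (j : ℕ)-l = ((j : ℕ)-1-l)+1 by omega, pow_succ]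
      rw [hs, hq]
      ring
    rw [hLp, Finset.sum_range_succ, Nat.sub_self, pow_zero, pow_zero,
      div_self (Dq_ne_zero hk _), Finset.sum_neg_distrib, Matrix.of_apply]
    ring

theorem stmt_15 (n k : ℕ) (hk : 1 ≤ k) :
    Matrix.det (Matrix.of fun i j : Fin n =>
        if (j : ℕ) ≤ (i : ℕ) + 1 then
          qq ^ ((((i : ℕ) : ℤ) - ((j : ℕ) : ℤ)) * (((i : ℕ) : ℤ) - ((j : ℕ) : ℤ) - 1) / 2).toNat *
            qChoose ((i : ℕ) + (j : ℕ) + k) ((i : ℕ) + 1 - (j : ℕ))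
        else 0)
      = (qInt k / qInt (2 * n + k)) * qChoose (2 * n + k) n := by
  have hM : (Matrix.of fun i j : Fin n =>
      if (j : ℕ) ≤ (i : ℕ) + 1 then
        qq ^ ((((i : ℕ) : ℤ) - ((j : ℕ) : ℤ)) * (((i : ℕ) : ℤ) - ((j : ℕ) : ℤ) - 1) / 2).toNat *
          qChoose ((i : ℕ) + (j : ℕ) + k) ((i : ℕ) + 1 - (j : ℕ))
      else 0)
      = Matrix.of fun i j : Fin n => ment k (i : ℕ) (j : ℕ) := rfl
  rw [hM, ← Lmat_mul_Umat hk, Matrix.det_mul,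
    Matrix.det_of_lowerTriangular (Lmat n k) (Lmat_tri hk),
    Matrix.det_of_upperTriangular (Umat_tri n k)]
  have hLd : ∏ i : Fin n, Lmat n k i i = 1 := by
    rw [Finset.prod_congr rfl (fun i _ => Lmat_diag hk i)]
    exact Finset.prod_const_one
  have hUd : ∏ i : Fin n, Umat n k i i = Dq k n := by
    have hdiag : ∀ i : Fin n, Umat n k i i = Dq k ((i : ℕ)+1) / Dq k (i : ℕ) := by
      intro i
      show (if (i : ℕ) = (i : ℕ) then Dq k ((i : ℕ)+1) / Dq k (i : ℕ)
        else if (i : ℕ) = (i : ℕ) + 1 then qq else 0) = _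
      rw [if_pos rfl]
    rw [Finset.prod_congr rfl (fun i _ => hdiag i),
      Fin.prod_univ_eq_prod_range (fun i => Dq k (i+1) / Dq k i) n]
    exact Dq_teles k hk n
  rw [hLd, hUd, one_mul]
  rfl
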